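/- Let K be a finite family of axis-parallel closed rectangles in ℝ² whose intersection graph I(K) is a comparability graph. Then mis(K) = mhs(K), i.e. the maximum cardinality of an independent set of K equals the minimum cardinality of a hitting set of K. -/

import Mathlib

open scoped Classical

noncomputable section

abbrev Pt : Type := ℝ × ℝ
abbrev Rect : Type := Set Pt

def IsRect (R : Rect) : Prop := ∃ a b : Pt, a ≤ b ∧ R = Set.Icc a b

def Intersects (R S : Rect) : Prop := (R ∩ S).Nonempty

def IndepFamily (I : Set Rect) : Prop :=
  ∀ R ∈ I, ∀ S ∈ I, R ≠ S → R ∩ S = ∅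

def IsHittingSet (H : Set Pt) (C : Set Rect) : Prop :=
  ∀ R ∈ C, ∃ p ∈ H, p ∈ R

def mis (C : Set Rect) : ℕ :=
  sSup {n | ∃ I : Finset Rect, ↑I ⊆ C ∧ IndepFamily ↑I ∧ I.card = n}

def mhs (C : Set Rect) : ℕ :=
  sInf {n | ∃ H : Finset Pt, IsHittingSet ↑H C ∧ H.card = n}

def brf (A B : Finset Pt) (Z : Set Pt) : Set Rect :=
  {R | ∃ a ∈ A, ∃ b ∈ B, a ≤ b ∧ Set.Icc a b ⊆ Z ∧ R = Set.Icc a b}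

def Standing (A B : Finset Pt) (Z : Set Pt) : Prop :=
  (A ∩ B = ∅) ∧ (↑(A ∪ B) ⊆ Z) ∧
  (∀ p ∈ A ∪ B, ∃ i j : ℤ, 1 ≤ i ∧ i ≤ ((A ∪ B).card : ℤ) ∧ 1 ≤ j ∧ j ≤ ((A ∪ B).card : ℤ) ∧
    p = ((i : ℝ), (j : ℝ))) ∧
  (∀ p ∈ A ∪ B, ∀ q ∈ A ∪ B, p ≠ q → p.1 ≠ q.1 ∧ p.2 ≠ q.2)

def minRects (C : Set Rect) : Set Rect :=
  {R | R ∈ C ∧ ∀ S ∈ C, S ⊆ R → S = R}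

def IsRectCorner (p : Pt) (R : Rect) : Prop :=
  ∃ a b : Pt, a ≤ b ∧ R = Set.Icc a b ∧
    (p = a ∨ p = b ∨ p = (a.1, b.2) ∨ p = (b.1, a.2))

def CornerFree (R S : Rect) : Prop :=
  (∀ p, IsRectCorner p R → p ∉ interior S) ∧ (∀ p, IsRectCorner p S → p ∉ interior R)

def CFI (K : Set Rect) : Prop :=
  ∀ R ∈ K, ∀ S ∈ K, R ≠ S → CornerFree R S

def interGraph (K : Set Rect) : SimpleGraph K :=
  SimpleGraph.fromRel (fun R S => Intersects (R : Rect) (S : Rect))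

def IsComparabilityGraph {V : Type*} (G : SimpleGraph V) : Prop :=
  ∃ le : V → V → Prop, (∀ v, le v v) ∧
    (∀ u v w, le u v → le v w → le u w) ∧
    (∀ u v, le u v → le v u → u = v) ∧
    (∀ u v, G.Adj u v ↔ u ≠ v ∧ (le u v ∨ le v u))

def QSTAB (n : ℕ) (C : Finset Rect) : Set (Rect → ℝ) :=
  {x | (∀ R, 0 ≤ x R) ∧ (∀ R ∉ C, x R = 0) ∧
    ∀ i j : ℤ, 1 ≤ i → i ≤ (n : ℤ) → 1 ≤ j → j ≤ (n : ℤ) →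
      ∑ R ∈ C.filter (fun R => ((i : ℝ), (j : ℝ)) ∈ R), x R ≤ 1}

def misLP (n : ℕ) (C : Finset Rect) : ℝ :=
  sSup {s | ∃ x ∈ QSTAB n C, s = ∑ R ∈ C, x R}

def cliqueNum' {V : Type*} (G : SimpleGraph V) : ℕ :=
  sSup {n | ∃ s : Finset V, G.IsNClique n s}

def IsPerfect {V : Type*} (G : SimpleGraph V) : Prop :=
  ∀ S : Set V, (G.induce S).chromaticNumber = (cliqueNum' (G.induce S) : ℕ∞)

def rectArea (R : Rect) : ℝ :=
  (sSup (Prod.fst '' R) - sInf (Prod.fst '' R)) *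
  (sSup (Prod.snd '' R) - sInf (Prod.snd '' R))

def blCorner (R : Rect) : Pt := (sInf (Prod.fst '' R), sInf (Prod.snd '' R))
def trCorner (R : Rect) : Pt := (sSup (Prod.fst '' R), sSup (Prod.snd '' R))


/-- A finite nonempty chain has a greatest element. -/
lemma chain_exists_top {α : Type*} [PartialOrder α] (c : Finset α)
    (hc : IsChain (· ≤ ·) (c : Set α)) (hne : c.Nonempty) :
    ∃ m ∈ c, ∀ y ∈ c, y ≤ m := by
  obtain ⟨m, hm, hmax⟩ : ∃ m ∈ c, ∀ x ∈ c, ¬ m < x := let ⟨i, hi⟩ := Finset.exists_maximal hne; ⟨i, hi.1, fun x hx hlt => (not_le_of_gt hlt) (hi.2 hx hlt.le)⟩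
  refine ⟨m, hm, fun y hy => ?_⟩
  by_cases hy' : y = m
  · exact hy'.le
  · rcases hc (by exact_mod_cast hy) (by exact_mod_cast hm) hy' with h | h
    · exact h
    · exact absurd (lt_of_le_of_ne h (Ne.symm hy')) (hmax y hy)

/-- Dilworth's theorem (finite version): if every antichain in `s` has at most `k`
elements, then `s` can be covered by at most `k` pairwise disjoint chains. -/
lemma dilworth {α : Type*} [PartialOrder α] (s : Finset α) :
    ∀ k : ℕ, (∀ t ⊆ s, IsAntichain (· ≤ ·) (t : Set α) → t.card ≤ k) →
    ∃ D : Finset (Finset α), D.card ≤ k ∧ (∀ c ∈ D, c ⊆ s ∧ IsChain (· ≤ ·) (c : Set α)) ∧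
      (∀ c ∈ D, ∀ c' ∈ D, c ≠ c' → Disjoint c c') ∧ (∀ x ∈ s, ∃ c ∈ D, x ∈ c) := by
  classical
  induction s using Finset.strongInduction with
  | _ s ih =>
  intro k hk
  rcases s.eq_empty_or_nonempty with rfl | hsne
  · exact ⟨∅, by simp, by simp, by simp, by simp⟩
  obtain ⟨a, ha, hamax⟩ : ∃ a ∈ s, ∀ x ∈ s, ¬ a < x := let ⟨i, hi⟩ := Finset.exists_maximal hsne; ⟨i, hi.1, fun x hx hlt => (not_le_of_gt hlt) (hi.2 hx hlt.le)⟩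
  set s' := s.erase a with hs'
  have hs'sub : s' ⊆ s := Finset.erase_subset _ _
  have hs'ss : s' ⊂ s := Finset.erase_ssubset ha
  -- the width of s'
  have hPne : (∅ : Finset α) ∈ (s'.powerset).filter
      (fun t : Finset α => IsAntichain (· ≤ ·) (t : Set α)) := by
    simp [Finset.mem_filter, Finset.empty_subset]
  obtain ⟨tstar, htstar, htmax⟩ := Finset.exists_max_image
    ((s'.powerset).filter (fun t : Finset α => IsAntichain (· ≤ ·) (t : Set α)))
    Finset.card ⟨∅, hPne⟩
  rw [Finset.mem_filter, Finset.mem_powerset] at htstar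
  set k' := tstar.card with hk'def
  have hwidth : ∀ t ⊆ s', IsAntichain (· ≤ ·) (t : Set α) → t.card ≤ k' := by
    intro t hts hta
    exact htmax t (by rw [Finset.mem_filter, Finset.mem_powerset]; exact ⟨hts, hta⟩)
  have hk'k : k' ≤ k := hk tstar (htstar.1.trans hs'sub) htstar.2
  obtain ⟨D', hD'card, hD'chain, hD'disj, hD'cover⟩ := ih s' hs'ss k' hwidth
  by_cases hcase : ∃ t ⊆ s', IsAntichain (· ≤ ·) (t : Set α) ∧ t.card = k' ∧
      ∀ x ∈ t, ¬ x ≤ a ∧ ¬ a ≤ x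
  · -- Case 1: add {a} as a new chain
    obtain ⟨t, hts, hta, htc, htinc⟩ := hcase
    have hat : a ∉ t := fun h => (htinc a h).1 le_rfl
    have hins : IsAntichain (· ≤ ·) ((insert a t : Finset α) : Set α) := by
      intro x hx y hy hxy hle
      simp only [Finset.coe_insert, Set.mem_insert_iff, Finset.mem_coe] at hx hy
      rcases hx with rfl | hx <;> rcases hy with rfl | hy
      · exact hxy rfl
      · exact (htinc y hy).2 hle
      · exact (htinc x hx).1 hle
      · exact hta (by exact_mod_cast hx) (by exact_mod_cast hy) hxy hle
    have hk1 : k' + 1 ≤ k := by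
      have := hk (insert a t) (Finset.insert_subset ha (hts.trans hs'sub)) hins
      rwa [Finset.card_insert_of_notMem hat, htc] at this
    refine ⟨insert {a} D', ?_, ?_, ?_, ?_⟩
    · exact (Finset.card_insert_le _ _).trans (by omega)
    · intro c hc
      rcases Finset.mem_insert.mp hc with rfl | hc
      · exact ⟨Finset.singleton_subset_iff.mpr ha, Set.Subsingleton.isChain (by simp)⟩
      · exact ⟨(hD'chain c hc).1.trans hs'sub, (hD'chain c hc).2⟩
    · intro c hc c' hc' hne
      have key : ∀ c'' ∈ D', Disjoint ({a} : Finset α) c'' := by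
        intro c'' hc''
        refine Finset.disjoint_singleton_left.mpr (fun h => ?_)
        exact Finset.notMem_erase a s ((hD'chain c'' hc'').1 h)
      rcases Finset.mem_insert.mp hc with rfl | hc
      · rcases Finset.mem_insert.mp hc' with rfl | hc'
        · exact absurd rfl hne
        · exact key c' hc'
      · rcases Finset.mem_insert.mp hc' with rfl | hc'
        · exact (key c hc).symm
        · exact hD'disj c hc c' hc' hne
    · intro x hx
      by_cases hxa : x = a
      · exact ⟨{a}, Finset.mem_insert_self _ _, by simp [hxa]⟩
      · obtain ⟨c, hc, hxc⟩ := hD'cover x (Finset.mem_erase.mpr ⟨hxa, hx⟩)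
        exact ⟨c, Finset.mem_insert_of_mem hc, hxc⟩
  · -- Case 2
    push_neg at hcase
    have hcase' : ∀ t ⊆ s', IsAntichain (· ≤ ·) (t : Set α) → t.card = k' →
        ∃ x ∈ t, x ≤ a := by
      intro t hts hta htc
      obtain ⟨x, hx, h⟩ := hcase t hts hta htc
      by_cases hxa : x ≤ a
      · exact ⟨x, hx, hxa⟩
      · have hax : a ≤ x := h hxa
        have hxs : x ∈ s := hs'sub (hts hx)
        have : a = x := le_antisymm hax (by
          by_contra hc
          exact hamax x hxs (lt_of_le_of_ne hax (fun he => hc (he ▸ le_rfl))))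
        exact absurd (Finset.mem_erase.mp (hts hx)).1 (by rw [← this]; exact fun h => h rfl)
    by_cases hk'0 : k' = 0
    · -- s' must be empty, s = {a}
      have hs'e : s' = ∅ := by
        by_contra h
        obtain ⟨x, hx⟩ := Finset.nonempty_of_ne_empty h
        have : ({x} : Finset α).card ≤ k' := hwidth {x} (by simpa using hx)
          ((Set.Subsingleton.isAntichain (by simp) _))
        simp [hk'0] at this
      have h1k : 1 ≤ k := by
        have := hk {a} (by simpa using ha) ((Set.Subsingleton.isAntichain (by simp) _))
        simpa using this
      refine ⟨{{a}}, by simpa using h1k, ?_, ?_, ?_⟩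
      · intro c hc
        rw [Finset.mem_singleton] at hc
        subst hc
        exact ⟨Finset.singleton_subset_iff.mpr ha, Set.Subsingleton.isChain (by simp)⟩
      · intro c hc c' hc' hne
        rw [Finset.mem_singleton] at hc hc'
        exact absurd (hc.trans hc'.symm) hne
      · intro x hx
        refine ⟨{a}, Finset.mem_singleton_self _, ?_⟩
        by_contra hxa
        have : x ∈ s' := Finset.mem_erase.mpr ⟨by simpa using hxa, hx⟩
        rw [hs'e] at this
        exact absurd this (Finset.notMem_empty x)
    have hk'pos : 1 ≤ k' := Nat.one_le_iff_ne_zero.mpr hk'0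
    -- every maximum antichain of s' meets every chain of D'
    have hchainanti : ∀ c ∈ D', ∀ t ⊆ s', IsAntichain (· ≤ ·) (t : Set α) →
        (c ∩ t).card ≤ 1 := by
      intro c hc t hts hta
      rw [Finset.card_le_one]
      intro x hx y hy
      rw [Finset.mem_inter] at hx hy
      by_contra hne
      rcases (hD'chain c hc).2 (by exact_mod_cast hx.1) (by exact_mod_cast hy.1) hne
        with h | h
      · exact hta (by exact_mod_cast hx.2) (by exact_mod_cast hy.2) hne h
      · exact hta (by exact_mod_cast hy.2) (by exact_mod_cast hx.2) (Ne.symm hne) h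
    have hmeets : ∀ c ∈ D', ∀ t ⊆ s', IsAntichain (· ≤ ·) (t : Set α) → t.card = k' →
        (c ∩ t).Nonempty := by
      intro c hc t hts hta htc
      rw [Finset.nonempty_iff_ne_empty]
      intro hem
      have hcov : t ⊆ (D'.erase c).biUnion (fun c' => c' ∩ t) := by
        intro x hx
        obtain ⟨c', hc', hxc'⟩ := hD'cover x (hts hx)
        have hcc : c' ≠ c := by
          rintro rfl
          exact absurd (Finset.mem_inter.mpr ⟨hxc', hx⟩) (by simp [hem])
        exact Finset.mem_biUnion.mpr ⟨c', Finset.mem_erase.mpr ⟨hcc, hc'⟩,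
          Finset.mem_inter.mpr ⟨hxc', hx⟩⟩
      have : t.card ≤ ∑ c' ∈ D'.erase c, (c' ∩ t).card :=
        (Finset.card_le_card hcov).trans (Finset.card_biUnion_le)
      have hsum : ∑ c' ∈ D'.erase c, (c' ∩ t).card ≤ (D'.erase c).card := by
        refine (Finset.sum_le_card_nsmul _ _ 1 ?_).trans (by simp)
        intro c' hc'
        exact hchainanti c' (Finset.mem_of_mem_erase hc') t hts hta
      have hec : (D'.erase c).card = D'.card - 1 := Finset.card_erase_of_mem hc
      omega
    -- the top elements of "useful" parts of chains
    set T : Finset α → Finset α := fun c => c.filter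
      (fun x : α => ∃ t ⊆ s', IsAntichain (· ≤ ·) (t : Set α) ∧ t.card = k' ∧ x ∈ t) with hT
    have hTc : ∀ c, T c ⊆ c := fun c => Finset.filter_subset _ _
    have hTne : ∀ c ∈ D', (T c).Nonempty := by
      intro c hc
      obtain ⟨x, hx⟩ := hmeets c hc tstar htstar.1 htstar.2 rfl
      rw [Finset.mem_inter] at hx
      exact ⟨x, Finset.mem_filter.mpr ⟨hx.1, tstar, htstar.1, htstar.2, rfl, hx.2⟩⟩
    have hm : ∀ c, c ∈ D' → ∃ x, x ∈ T c ∧ ∀ y ∈ T c, y ≤ x := by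
      intro c hc
      obtain ⟨m, hm1, hm2⟩ := chain_exists_top (T c)
        ((hD'chain c hc).2.mono (by exact_mod_cast hTc c)) (hTne c hc)
      exact ⟨m, hm1, hm2⟩
    haveI : Nonempty α := ⟨a⟩
    choose! m hmT hmtop using hm
    -- the m c for c ∈ D' form an antichain of size D'.card = k'
    have hD'k' : D'.card = k' := by
      have h1 : k' ≤ D'.card := by
        have hcov : tstar ⊆ D'.biUnion (fun c' => c' ∩ tstar) := by
          intro x hx
          obtain ⟨c', hc', hxc'⟩ := hD'cover x (htstar.1 hx)
          exact Finset.mem_biUnion.mpr ⟨c', hc', Finset.mem_inter.mpr ⟨hxc', hx⟩⟩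
        have h2 : tstar.card ≤ ∑ c' ∈ D', (c' ∩ tstar).card :=
          (Finset.card_le_card hcov).trans (Finset.card_biUnion_le)
        have h3 : ∑ c' ∈ D', (c' ∩ tstar).card ≤ D'.card := by
          refine (Finset.sum_le_card_nsmul _ _ 1 ?_).trans (by simp)
          intro c' hc'
          exact hchainanti c' hc' tstar htstar.1 htstar.2
        omega
      omega
    have hminj : ∀ c ∈ D', ∀ c' ∈ D', m c = m c' → c = c' := by
      intro c hc c' hc' he
      by_contra hne
      exact Finset.disjoint_left.mp (hD'disj c hc c' hc' hne)
        (hTc c (hmT c hc)) (he ▸ hTc c' (hmT c' hc'))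
    have hAanti : IsAntichain (· ≤ ·) ((D'.image m : Finset α) : Set α) := by
      intro x hx y hy hxy hle
      simp only [Finset.coe_image, Set.mem_image, Finset.mem_coe] at hx hy
      obtain ⟨c, hc, rfl⟩ := hx
      obtain ⟨c', hc', rfl⟩ := hy
      have hcc : c ≠ c' := fun h => hxy (h ▸ rfl)
      -- m c < m c'
      have hlt : m c < m c' := lt_of_le_of_ne hle hxy
      obtain ⟨t, hts, hta, htc, hmem⟩ := Finset.mem_filter.mp (hmT c' hc') |>.2
      obtain ⟨z, hz⟩ := hmeets c hc t hts hta htc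
      rw [Finset.mem_inter] at hz
      have hzT : z ∈ T c := Finset.mem_filter.mpr ⟨hz.1, t, hts, hta, htc, hz.2⟩
      have hzm : z ≤ m c := hmtop c hc z hzT
      have hzlt : z < m c' := lt_of_le_of_lt hzm hlt
      exact hta (by exact_mod_cast hz.2) (by exact_mod_cast hmem) (ne_of_lt hzlt) hzlt.le
    have hAsub : D'.image m ⊆ s' := by
      intro x hx
      obtain ⟨c, hc, rfl⟩ := Finset.mem_image.mp hx
      exact (hD'chain c hc).1 (hTc c (hmT c hc))
    have hAcard : (D'.image m).card = k' := by
      rw [Finset.card_image_of_injOn (fun c hc c' hc' => hminj c hc c' hc'), hD'k']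
    obtain ⟨x0, hx0, hx0a⟩ := hcase' (D'.image m) hAsub hAanti hAcard
    obtain ⟨c0, hc0, hx0e⟩ := Finset.mem_image.mp hx0
    subst hx0e
    -- the new chain
    set F : Finset α := c0.filter (fun y => y ≤ m c0) with hF
    set Kc : Finset α := insert a F with hKc
    have hFc0 : F ⊆ c0 := Finset.filter_subset _ _
    have hKcs : Kc ⊆ s := by
      intro x hx
      rcases Finset.mem_insert.mp hx with rfl | hx
      · exact ha
      · exact hs'sub ((hD'chain c0 hc0).1 (hFc0 hx))
    have hKchain : IsChain (· ≤ ·) ((Kc : Finset α) : Set α) := by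
      intro x hx y hy hxy
      simp only [hKc, Finset.coe_insert, Set.mem_insert_iff, Finset.mem_coe] at hx hy
      rcases hx with rfl | hx <;> rcases hy with rfl | hy
      · exact absurd rfl hxy
      · exact Or.inr ((Finset.mem_filter.mp hy).2.trans hx0a)
      · exact Or.inl ((Finset.mem_filter.mp hx).2.trans hx0a)
      · exact (hD'chain c0 hc0).2 (by exact_mod_cast hFc0 hx) (by exact_mod_cast hFc0 hy) hxy
    set s'' : Finset α := s \ Kc with hs''
    have hs''ss : s'' ⊂ s := by
      refine Finset.sdiff_ssubset ?_ ?_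
      · exact hKcs
      · exact ⟨a, Finset.mem_insert_self _ _⟩
    have hs''s' : s'' ⊆ s' := by
      intro x hx
      rw [hs'', Finset.mem_sdiff] at hx
      refine Finset.mem_erase.mpr ⟨?_, hx.1⟩
      rintro rfl
      exact hx.2 (Finset.mem_insert_self _ _)
    have hwidth'' : ∀ t ⊆ s'', IsAntichain (· ≤ ·) (t : Set α) → t.card ≤ k' - 1 := by
      intro t hts hta
      have h1 : t.card ≤ k' := hwidth t (hts.trans hs''s') hta
      by_contra hlt
      have htc : t.card = k' := by omega
      obtain ⟨z, hz⟩ := hmeets c0 hc0 t (hts.trans hs''s') hta htc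
      rw [Finset.mem_inter] at hz
      have hzT : z ∈ T c0 := Finset.mem_filter.mpr ⟨hz.1, t, hts.trans hs''s', hta, htc, hz.2⟩
      have hzK : z ∈ Kc := Finset.mem_insert_of_mem
        (Finset.mem_filter.mpr ⟨hz.1, hmtop c0 hc0 z hzT⟩)
      have := hts hz.2
      rw [hs'', Finset.mem_sdiff] at this
      exact this.2 hzK
    obtain ⟨D'', hD''card, hD''chain, hD''disj, hD''cover⟩ := ih s'' hs''ss (k' - 1) hwidth''
    have hKD'' : ∀ c ∈ D'', Disjoint Kc c := by
      intro c hc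
      rw [Finset.disjoint_right]
      intro x hx hxK
      have := (hD''chain c hc).1 hx
      rw [hs'', Finset.mem_sdiff] at this
      exact this.2 hxK
    refine ⟨insert Kc D'', ?_, ?_, ?_, ?_⟩
    · exact (Finset.card_insert_le _ _).trans (by omega)
    · intro c hc
      rcases Finset.mem_insert.mp hc with rfl | hc
      · exact ⟨hKcs, hKchain⟩
      · exact ⟨(hD''chain c hc).1.trans (hs''s'.trans hs'sub), (hD''chain c hc).2⟩
    · intro c hc c' hc' hne
      rcases Finset.mem_insert.mp hc with rfl | hc
      · rcases Finset.mem_insert.mp hc' with rfl | hc'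
        · exact absurd rfl hne
        · exact hKD'' c' hc'
      · rcases Finset.mem_insert.mp hc' with rfl | hc'
        · exact (hKD'' c hc).symm
        · exact hD''disj c hc c' hc' hne
    · intro x hx
      by_cases hxK : x ∈ Kc
      · exact ⟨Kc, Finset.mem_insert_self _ _, hxK⟩
      · obtain ⟨c, hc, hxc⟩ := hD''cover x (by rw [hs'', Finset.mem_sdiff]; exact ⟨hx, hxK⟩)
        exact ⟨c, Finset.mem_insert_of_mem hc, hxc⟩

/-- Helly property for axis-parallel boxes: pairwise intersecting rectangles
have a common point. -/
lemma helly_rect (c : Finset Rect) (hne : c.Nonempty) (hr : ∀ R ∈ c, IsRect R)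
    (hint : ∀ R ∈ c, ∀ S ∈ c, Intersects R S) : ∃ p : Pt, ∀ R ∈ c, p ∈ R := by
  classical
  have h : ∀ R : Rect, R ∈ c → ∃ ab : Pt × Pt, ab.1 ≤ ab.2 ∧ R = Set.Icc ab.1 ab.2 := by
    intro R hR
    obtain ⟨a, b, hab, he⟩ := hr R hR
    exact ⟨(a, b), hab, he⟩
  choose! f hf1 hf2 using h
  refine ⟨c.sup' hne (fun R => (f R).1), fun R hR => ?_⟩
  rw [hf2 R hR, Set.mem_Icc]
  refine ⟨Finset.le_sup' (fun R => (f R).1) hR, Finset.sup'_le _ _ (fun S hS => ?_)⟩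
  obtain ⟨q, hq1, hq2⟩ := hint S hS R hR
  rw [hf2 S hS, Set.mem_Icc] at hq1
  rw [hf2 R hR, Set.mem_Icc] at hq2
  exact hq1.1.trans hq2.2

theorem mis_eq_mhs_of_comparability (K : Set Rect) (hfin : K.Finite)
    (hrect : ∀ R ∈ K, IsRect R)
    (hcomp : IsComparabilityGraph (interGraph K)) :
    mis K = mhs K := by
  classical
  obtain ⟨le, hrefl, htrans, hanti, hadj⟩ := hcomp
  haveI : Fintype ↥K := hfin.fintype
  let PO : PartialOrder ↥K :=
    { le := le
      le_refl := hrefl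
      le_trans := htrans
      le_antisymm := hanti
      lt := fun u v => le u v ∧ ¬ le v u
      lt_iff_le_not_ge := fun _ _ => Iff.rfl }
  -- adjacency in the intersection graph
  have hAdjIff : ∀ u v : ↥K, (interGraph K).Adj u v ↔ u ≠ v ∧ Intersects (u : Rect) v := by
    intro u v
    rw [interGraph, SimpleGraph.fromRel_adj]
    constructor
    · rintro ⟨h1, h2 | h2⟩
      · exact ⟨h1, h2⟩
      · exact ⟨h1, by rwa [Intersects, Set.inter_comm] at h2⟩
    · rintro ⟨h1, h2⟩
      exact ⟨h1, Or.inl h2⟩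
  have hcompIff : ∀ u v : ↥K, u ≠ v → ((le u v ∨ le v u) ↔ Intersects (u : Rect) v) := by
    intro u v huv
    have h1 := hadj u v
    rw [hAdjIff u v] at h1
    constructor
    · intro h
      exact (h1.mpr ⟨huv, h⟩).2
    · intro h
      exact (h1.mp ⟨huv, h⟩).2
  -- each rectangle in K is nonempty
  have hKne : ∀ R ∈ K, R.Nonempty := by
    intro R hR
    obtain ⟨a, b, hab, he⟩ := hrect R hR
    exact he ▸ Set.nonempty_Icc.mpr hab
  set misSet := {n | ∃ I : Finset Rect, ↑I ⊆ K ∧ IndepFamily ↑I ∧ I.card = n} with hmisSet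
  have hmis0 : 0 ∈ misSet := ⟨∅, by simp, fun R hR => by simp at hR, rfl⟩
  have hmisBdd : BddAbove misSet := by
    refine ⟨hfin.toFinset.card, fun n hn => ?_⟩
    obtain ⟨I, hIK, _, rfl⟩ := hn
    exact Finset.card_le_card (fun R hR => hfin.mem_toFinset.mpr (hIK hR))
  -- the set of hitting set sizes is nonempty
  have hmhsNe : {n | ∃ H : Finset Pt, IsHittingSet ↑H K ∧ H.card = n}.Nonempty := by
    have hpt : ∀ R : Rect, R ∈ hfin.toFinset → ∃ p : Pt, p ∈ R := by
      intro R hR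
      exact hKne R (hfin.mem_toFinset.mp hR)
    choose! pt hpt' using hpt
    refine ⟨(hfin.toFinset.image pt).card, hfin.toFinset.image pt, ?_, rfl⟩
    intro R hR
    refine ⟨pt R, ?_, hpt' R (hfin.mem_toFinset.mpr hR)⟩
    exact_mod_cast Finset.mem_image_of_mem pt (hfin.mem_toFinset.mpr hR)
  -- direction 1 : mis K ≤ mhs K
  have hdir1 : mis K ≤ mhs K := by
    obtain ⟨H, hH, hHcard⟩ := Nat.sInf_mem hmhsNe
    refine csSup_le ⟨0, hmis0⟩ ?_
    rintro n ⟨I, hIK, hIndep, rfl⟩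
    have hpick : ∀ R : Rect, R ∈ I → ∃ p, p ∈ H ∧ p ∈ R := by
      intro R hR
      obtain ⟨p, hp1, hp2⟩ := hH R (hIK hR)
      exact ⟨p, by exact_mod_cast hp1, hp2⟩
    choose! pk hk1 hk2 using hpick
    have hinj : Set.InjOn pk ↑I := by
      intro R hR S hS he
      by_contra hne
      have h0 := hIndep R hR S hS hne
      have : pk R ∈ R ∩ S := ⟨hk2 R (by exact_mod_cast hR), he ▸ hk2 S (by exact_mod_cast hS)⟩
      rw [h0] at this
      exact this
    calc I.card = (I.image pk).card := (Finset.card_image_of_injOn hinj).symm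
      _ ≤ H.card := Finset.card_le_card (fun p hp => by
          obtain ⟨R, hR, rfl⟩ := Finset.mem_image.mp hp
          exact hk1 R hR)
      _ = mhs K := hHcard
  -- direction 2 : mhs K ≤ mis K, via Dilworth
  have hwidthK : ∀ t ⊆ (Finset.univ : Finset ↥K), IsAntichain (fun u v => le u v) (t : Set ↥K) →
      t.card ≤ mis K := by
    intro t _ hanti'
    have hinjval : Set.InjOn (fun u : ↥K => (u : Rect)) ↑t := fun u _ v _ h => Subtype.ext h
    set Ims : Finset Rect := t.image (fun u : ↥K => (u : Rect)) with hIms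
    have hmem : ∀ R ∈ Ims, ∃ u : ↥K, u ∈ t ∧ (u : Rect) = R := by
      intro R hR
      obtain ⟨u, hu, he⟩ := Finset.mem_image.mp hR
      exact ⟨u, hu, he⟩
    refine le_csSup hmisBdd ⟨Ims, ?_, ?_, ?_⟩
    · intro R hR
      obtain ⟨u, _, rfl⟩ := hmem R (by exact_mod_cast hR)
      exact u.2
    · intro R hR S hS hne
      obtain ⟨u, hu, rfl⟩ := hmem R (by exact_mod_cast hR)
      obtain ⟨v, hv, rfl⟩ := hmem S (by exact_mod_cast hS)
      have huv : u ≠ v := fun h => hne (by rw [h])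
      have h1 : ¬ (le u v ∨ le v u) := by
        rintro (h | h)
        · exact hanti' (by exact_mod_cast hu) (by exact_mod_cast hv) huv h
        · exact hanti' (by exact_mod_cast hv) (by exact_mod_cast hu) huv.symm h
      rw [hcompIff u v huv] at h1
      exact Set.not_nonempty_iff_eq_empty.mp h1
    · exact Finset.card_image_of_injOn hinjval
  obtain ⟨D, hDcard, hDchain, _, hDcover⟩ := @dilworth ↥K PO (Finset.univ : Finset ↥K) (mis K) hwidthK
  have hpt : ∀ c : Finset ↥K, c ∈ D → c.Nonempty → ∃ p : Pt, ∀ u ∈ c, p ∈ (u : Rect) := by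
    intro c hc hcne
    have h := helly_rect (c.image (fun u : ↥K => (u : Rect))) (hcne.image _)
      (fun R hR => by
        obtain ⟨u, _, rfl⟩ := Finset.mem_image.mp hR
        exact hrect _ u.2)
      (fun R hR S hS => by
        obtain ⟨u, hu, rfl⟩ := Finset.mem_image.mp hR
        obtain ⟨v, hv, rfl⟩ := Finset.mem_image.mp hS
        by_cases huv : u = v
        · subst huv
          obtain ⟨p, hp⟩ := hKne _ u.2
          exact ⟨p, hp, hp⟩
        · rw [← hcompIff u v huv]
          rcases (hDchain c hc).2 (by exact_mod_cast hu) (by exact_mod_cast hv) huv with h | h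
          · exact Or.inl (show le u v from h)
          · exact Or.inr (show le v u from h))
    obtain ⟨p, hp⟩ := h
    exact ⟨p, fun u hu => hp _ (Finset.mem_image_of_mem _ hu)⟩
  choose! ptc hptc using hpt
  set H : Finset Pt := (D.filter (fun c => c.Nonempty)).image ptc with hHdef
  have hhit : IsHittingSet ↑H K := by
    intro R hR
    obtain ⟨c, hc, huc⟩ := hDcover ⟨R, hR⟩ (Finset.mem_univ _)
    have hcne : c.Nonempty := ⟨_, huc⟩
    refine ⟨ptc c, ?_, hptc c hc hcne _ huc⟩
    exact_mod_cast Finset.mem_image_of_mem ptc (Finset.mem_filter.mpr ⟨hc, hcne⟩)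
  have hdir2 : mhs K ≤ mis K := by
    have hmem : H.card ∈ {n | ∃ H' : Finset Pt, IsHittingSet ↑H' K ∧ H'.card = n} :=
      ⟨H, hhit, rfl⟩
    refine le_trans (Nat.sInf_le hmem) ?_
    calc H.card ≤ (D.filter (fun c => c.Nonempty)).card := Finset.card_image_le
      _ ≤ D.card := Finset.card_filter_le _ _
      _ ≤ mis K := hDcard
  exact le_antisymm hdir1 hdir2
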